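/- Let u_k(t), b_k(t) (k ∈ ℤ) be real differentiable functions on an interval I satisfying the unrestricted Toda chain equations b_k' = u_{k+1} − u_k and u_k' = u_k(b_k − b_{k−1}) for all k ∈ ℤ and t ∈ I, and assume u_k(t) ≠ 0 for all k ∈ ℤ, t ∈ I. Fix j ∈ ℤ. Then b_j(t) = 0 for all t ∈ I if and only if the reflection conditions u_{j+n}(t) = u_{j−n+1}(t) and b_{j+n−1}(t) = −b_{j−n+1}(t) hold for all n ∈ ℤ and all t ∈ I. -/

import Mathlib

/-- For a solution of the unrestricted Toda chain with nonvanishing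
`u k`, the boundary condition `b j = 0` on the interval `I` is equivalent to the
reflection ("type B") conditions `u (j+n) = u (j-n+1)`, `b (j+n-1) = -b (j-n+1)`. -/
theorem toda_boundary_iff_reflection
    (I : Set ℝ) (hIopen : IsOpen I) (hIconn : I.OrdConnected)
    (u b : ℤ → ℝ → ℝ)
    (hToda_b : ∀ k : ℤ, ∀ t ∈ I, HasDerivAt (b k) (u (k + 1) t - u k t) t)
    (hToda_u : ∀ k : ℤ, ∀ t ∈ I, HasDerivAt (u k) (u k t * (b k t - b (k - 1) t)) t)
    (hne : ∀ k : ℤ, ∀ t ∈ I, u k t ≠ 0) (j : ℤ) :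
    (∀ t ∈ I, b j t = 0) ↔
      (∀ n : ℤ, ∀ t ∈ I,
        u (j + n) t = u (j - n + 1) t ∧ b (j + n - 1) t = -b (j - n + 1) t) := by
  have deriv_eq : ∀ (f g : ℝ → ℝ) (f' g' : ℝ) (t : ℝ), t ∈ I →
      (∀ s ∈ I, f s = g s) → HasDerivAt f f' t → HasDerivAt g g' t → f' = g' := by
    intro f g f' g' t ht heq hf hg
    have hev : g =ᶠ[nhds t] f :=
      Filter.eventuallyEq_of_mem (hIopen.mem_nhds ht) fun s hs => (heq s hs).symm
    exact (hf.congr_of_eventuallyEq hev).unique hg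
  constructor
  · intro hb
    have hu1 : ∀ t ∈ I, u (j + 1) t = u j t := by
      intro t ht
      have h0 : HasDerivAt (fun _ : ℝ => (0:ℝ)) 0 t := hasDerivAt_const t 0
      have := deriv_eq (b j) (fun _ => 0) (u (j+1) t - u j t) 0 t ht hb (hToda_b j t ht) h0
      linarith
    have key : ∀ n : ℤ, 1 ≤ n →
        (∀ t ∈ I, u (j + n) t = u (j - n + 1) t) ∧
        (∀ t ∈ I, b (j + n - 1) t = -b (j - n + 1) t) := by
      refine Int.le_induction (motive := fun n _ => (∀ t ∈ I, u (j + n) t = u (j - n + 1) t) ∧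
        (∀ t ∈ I, b (j + n - 1) t = -b (j - n + 1) t)) ?_ ?_
      ·
        constructor
        · intro t ht
          have e : j - 1 + 1 = j := by ring
          rw [e]; exact hu1 t ht
        · intro t ht
          have e1 : j + 1 - 1 = j := by ring
          have e2 : j - 1 + 1 = j := by ring
          rw [e1, e2, hb t ht]; ring
      · intro n hn ih
        obtain ⟨ihu, ihb⟩ := ih
        have hbnew : ∀ t ∈ I, b (j + n) t = -b (j - n) t := by
          intro t ht
          have hd := deriv_eq (u (j + n)) (u (j - n + 1))
            (u (j+n) t * (b (j+n) t - b (j+n-1) t))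
            (u (j-n+1) t * (b (j-n+1) t - b (j-n+1-1) t)) t ht ihu
            (hToda_u (j+n) t ht) (hToda_u (j-n+1) t ht)
          have hidx : j - n + 1 - 1 = j - n := by ring
          rw [hidx] at hd
          have hueq := ihu t ht
          have hne' := hne (j+n) t ht
          rw [hueq] at hd hne'
          have hcancel : b (j+n) t - b (j+n-1) t = b (j-n+1) t - b (j-n) t :=
            mul_left_cancel₀ hne' hd
          have := ihb t ht
          linarith
        constructor
        · intro t ht
          have hgd : HasDerivAt (fun s => -b (j - n) s) (-(u (j-n+1) t - u (j-n) t)) t :=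
            (hToda_b (j-n) t ht).neg
          have hd := deriv_eq (b (j + n)) (fun s => -b (j - n) s)
            (u (j+n+1) t - u (j+n) t) (-(u (j-n+1) t - u (j-n) t)) t ht hbnew
            (hToda_b (j+n) t ht) hgd
          have hueq := ihu t ht
          have e1 : j + (n+1) = j + n + 1 := by ring
          have e2 : j - (n+1) + 1 = j - n := by ring
          rw [e1, e2]
          linarith
        · intro t ht
          have e1 : j + (n+1) - 1 = j + n := by ring
          have e2 : j - (n+1) + 1 = j - n := by ring
          rw [e1, e2]; exact hbnew t ht
    intro n t ht
    constructor
    · rcases le_or_gt 1 n with h | h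
      · exact (key n h).1 t ht
      · have h' : 1 ≤ 1 - n := by omega
        have := (key (1-n) h').1 t ht
        have e1 : j + (1 - n) = j - n + 1 := by ring
        have e2 : j - (1 - n) + 1 = j + n := by ring
        rw [e1, e2] at this
        exact this.symm
    · rcases le_or_gt 1 n with h | h
      · exact (key n h).2 t ht
      · have h' : 1 ≤ 2 - n := by omega
        have := (key (2-n) h').2 t ht
        have e1 : j + (2 - n) - 1 = j - n + 1 := by ring
        have e2 : j - (2 - n) + 1 = j + n - 1 := by ring
        rw [e1, e2] at this
        linarith
  · intro h t ht
    have := (h 1 t ht).2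
    have e1 : j + 1 - 1 = j := by ring
    have e2 : j - 1 + 1 = j := by ring
    rw [e1, e2] at this
    linarith
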